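/- Let G be a finite simple graph with no isolated vertices, minimum degree δ and maximum degree Δ, and suppose δ/Δ ≥ t_0 where t_0 is the unique root of t^3+5t^2+11t-1 in (0,1). Then R(G) ≤ 4Δ·χ_{-2}(G), with equality if and only if G is regular. -/

import Mathlib

open Finset

variable {V : Type*}

/-- Randić index: `Σ_{uv∈E} (d_u d_v)^{-1/2}`, written as half a double sum over vertices. -/
noncomputable def randicIndex [Fintype V] (G : SimpleGraph V) [DecidableRel G.Adj] : ℝ :=
  (1 / 2) * ∑ u, ∑ v ∈ G.neighborFinset u,
    1 / Real.sqrt ((G.degree u : ℝ) * (G.degree v : ℝ))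

/-- General sum-connectivity index with exponent -2: `Σ_{uv∈E} (d_u+d_v)^{-2}`. -/
noncomputable def sumConnectivityNeg2 [Fintype V] (G : SimpleGraph V) [DecidableRel G.Adj] : ℝ :=
  (1 / 2) * ∑ u, ∑ v ∈ G.neighborFinset u,
    1 / ((G.degree u : ℝ) + (G.degree v : ℝ))^2

lemma hP_aux {t₀ x y : ℝ} (ht0 : 0 < t₀) (hroot : t₀^3 + 5*t₀^2 + 11*t₀ - 1 = 0)
    (hx : 0 < x) (hy : 0 < y) (hxl : t₀ * y ≤ x) :
    0 ≤ x^3 + 5*x^2*y + 11*x*y^2 - y^3 := by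
  have h3 : (0:ℝ) ≤ x - t₀*y := sub_nonneg.2 hxl
  have h1 : (0:ℝ) ≤ (x - t₀*y) * (x^2 + x*(t₀*y) + (t₀*y)^2) :=
    mul_nonneg h3 (by positivity)
  have h2 : (0:ℝ) ≤ y * ((x - t₀*y) * (x + t₀*y)) :=
    mul_nonneg hy.le (mul_nonneg h3 (by positivity))
  have h3' : (0:ℝ) ≤ y^2 * (x - t₀*y) := mul_nonneg (by positivity) h3
  have h0 : y^3 * (t₀^3 + 5*t₀^2 + 11*t₀ - 1) = 0 := by rw [hroot]; ring
  linarith [h1, h2, h3', h0]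

lemma hP_pos {t₀ x y : ℝ} (ht0 : 0 < t₀) (hroot : t₀^3 + 5*t₀^2 + 11*t₀ - 1 = 0)
    (hx : 0 < x) (hy : 0 < y) (hxl : t₀ * y < x) :
    0 < x^3 + 5*x^2*y + 11*x*y^2 - y^3 := by
  have h3 : (0:ℝ) ≤ x - t₀*y := sub_nonneg.2 hxl.le
  have h1 : (0:ℝ) ≤ (x - t₀*y) * (x^2 + x*(t₀*y) + (t₀*y)^2) :=
    mul_nonneg h3 (by positivity)
  have h2 : (0:ℝ) ≤ y * ((x - t₀*y) * (x + t₀*y)) :=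
    mul_nonneg hy.le (mul_nonneg h3 (by positivity))
  have h3' : (0:ℝ) < y^2 * (x - t₀*y) := mul_pos (by positivity) (sub_pos.2 hxl)
  have h0 : y^3 * (t₀^3 + 5*t₀^2 + 11*t₀ - 1) = 0 := by rw [hroot]; ring
  linarith [h1, h2, h3', h0]

lemma core_ineq {t₀ Δ x y : ℝ} (ht0 : 0 < t₀) (hroot : t₀^3 + 5*t₀^2 + 11*t₀ - 1 = 0)
    (hx : 0 < x) (hxy : x ≤ y) (hyΔ : y ≤ Δ) (hxl : t₀ * Δ ≤ x) :
    (x+y)^4 ≤ 16 * Δ^2 * (x*y) := by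
  have hy : 0 < y := hx.trans_le hxy
  have hxl' : t₀ * y ≤ x := le_trans (by nlinarith) hxl
  have hP := hP_aux ht0 hroot hx hy hxl'
  have hfac : (x+y)^4 - 16*x*y^3 = (x-y) * (x^3 + 5*x^2*y + 11*x*y^2 - y^3) := by ring
  have h1 : (x+y)^4 ≤ 16*x*y^3 := by
    nlinarith [mul_nonpos_of_nonpos_of_nonneg (sub_nonpos.2 hxy) hP]
  have h2 : 16*x*y^3 ≤ 16*Δ^2*(x*y) := by
    nlinarith [mul_pos hx hy, pow_le_pow_left₀ hy.le hyΔ 2]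
  linarith

lemma core_eq {t₀ Δ x y : ℝ} (ht0 : 0 < t₀) (hroot : t₀^3 + 5*t₀^2 + 11*t₀ - 1 = 0)
    (hx : 0 < x) (hxy : x ≤ y) (hyΔ : y ≤ Δ) (hxl : t₀ * Δ ≤ x)
    (heq : (x+y)^4 = 16 * Δ^2 * (x*y)) :
    y = Δ ∧ (x = y ∨ x = t₀ * Δ) := by
  have hy : 0 < y := hx.trans_le hxy
  have hΔ : 0 < Δ := hy.trans_le hyΔ
  have hxl' : t₀ * y ≤ x := le_trans (by nlinarith) hxl
  have hP := hP_aux ht0 hroot hx hy hxl'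
  have hfac : (x+y)^4 - 16*x*y^3 = (x-y) * (x^3 + 5*x^2*y + 11*x*y^2 - y^3) := by ring
  have h1 : (x+y)^4 ≤ 16*x*y^3 := by
    nlinarith [mul_nonpos_of_nonpos_of_nonneg (sub_nonpos.2 hxy) hP]
  have h2 : 16*x*y^3 ≤ 16*Δ^2*(x*y) := by
    nlinarith [mul_pos hx hy, pow_le_pow_left₀ hy.le hyΔ 2]
  have h1' : (x+y)^4 = 16*x*y^3 := le_antisymm h1 (by linarith)
  have hy2 : y^2 = Δ^2 := by
    have h16 : 16*(x*y)*(y^2) = 16*(x*y)*(Δ^2) := by linarith [h1', heq]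
    exact mul_left_cancel₀ (by positivity) h16
  have hyΔ' : y = Δ := by
    have h0 : (Δ - y) * (Δ + y) = 0 := by linear_combination (-1 : ℝ) * hy2
    rcases mul_eq_zero.mp h0 with h | h
    · linarith
    · linarith
  refine ⟨hyΔ', ?_⟩
  rcases eq_or_lt_of_le hxy with h | hlt
  · exact Or.inl h
  have hPzero : x^3 + 5*x^2*y + 11*x*y^2 - y^3 = 0 := by
    have hz : (x-y) * (x^3 + 5*x^2*y + 11*x*y^2 - y^3) = 0 := by linarith
    exact (mul_eq_zero.mp hz).resolve_left (by intro h; linarith [sub_neg.2 hlt])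
  rcases eq_or_lt_of_le hxl with h | hgt
  · exact Or.inr h.symm
  exfalso
  have hgt' : t₀ * y < x := by rw [hyΔ']; exact hgt
  exact absurd hPzero (ne_of_gt (hP_pos ht0 hroot hx hy hgt'))

lemma term_le {t₀ Δ x y : ℝ} (ht0 : 0 < t₀) (hroot : t₀^3 + 5*t₀^2 + 11*t₀ - 1 = 0)
    (hx : 0 < x) (hy : 0 < y) (hxΔ : x ≤ Δ) (hyΔ : y ≤ Δ)
    (hxl : t₀ * Δ ≤ x) (hyl : t₀ * Δ ≤ y) :
    (x+y)^4 ≤ 16 * Δ^2 * (x*y) := by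
  rcases le_total x y with h | h
  · exact core_ineq ht0 hroot hx h hyΔ hxl
  · have := core_ineq ht0 hroot hy h hxΔ hyl
    rw [add_comm x y, mul_comm x y]
    exact this

lemma term_eq {t₀ Δ x y : ℝ} (ht0 : 0 < t₀) (hroot : t₀^3 + 5*t₀^2 + 11*t₀ - 1 = 0)
    (hx : 0 < x) (hy : 0 < y) (hxΔ : x ≤ Δ) (hyΔ : y ≤ Δ)
    (hxl : t₀ * Δ ≤ x) (hyl : t₀ * Δ ≤ y)
    (heq : (x+y)^4 = 16 * Δ^2 * (x*y)) :
    (x = Δ ∧ y = Δ) ∨ x = t₀ * Δ ∨ y = t₀ * Δ := by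
  rcases le_total x y with h | h
  · obtain ⟨h1, h2⟩ := core_eq ht0 hroot hx h hyΔ hxl heq
    rcases h2 with h2 | h2
    · exact Or.inl ⟨h2.trans h1, h1⟩
    · exact Or.inr (Or.inl h2)
  · have heq' : (y+x)^4 = 16 * Δ^2 * (y*x) := by linear_combination heq
    obtain ⟨h1, h2⟩ := core_eq ht0 hroot hy h hxΔ hyl heq'
    rcases h2 with h2 | h2
    · exact Or.inl ⟨h1, h2.trans h1⟩
    · exact Or.inr (Or.inr h2)

lemma rat_no_root (q : ℚ) (h0 : 0 < q) (h1 : q < 1)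
    (h : q^3 + 5*q^2 + 11*q - 1 = 0) : False := by
  have hden : (q.den : ℚ) ≠ 0 := by exact_mod_cast q.den_nz
  have hq := Rat.num_div_den q
  have hnum : (q.num : ℚ) = q * q.den := (div_eq_iff hden).mp hq
  have hkeyQ : ((q.num:ℚ))^3 + 5*(q.num:ℚ)^2*q.den + 11*(q.num:ℚ)*(q.den:ℚ)^2 - (q.den:ℚ)^3 = 0 := by
    rw [hnum]; linear_combination (q.den:ℚ)^3 * h
  have hkey : (q.num^3 + 5*q.num^2*q.den + 11*q.num*q.den^2 - q.den^3 : ℤ) = 0 := by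
    exact_mod_cast hkeyQ
  have hdvd : (q.den : ℤ) ∣ q.num^3 :=
    ⟨(q.den:ℤ)^2 - 5*q.num^2 - 11*q.num*q.den, by linarith [hkey]⟩
  have hdvd' : q.den ∣ q.num.natAbs^3 := by
    have := Int.natAbs_dvd_natAbs.mpr hdvd
    rwa [Int.natAbs_pow] at this
  have hcop : Nat.Coprime q.den (q.num.natAbs^3) := ((q.reduced.pow_left 3)).symm
  have hden1 : q.den = 1 := hcop.eq_one_of_dvd hdvd'
  have hqz : (q.num : ℚ) = q := by rw [← hq, hden1]; simp
  have h0' : 0 < q.num := by exact_mod_cast hqz ▸ h0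
  have h1' : q.num < 1 := by exact_mod_cast hqz ▸ h1
  omega

lemma convert_le {Δ x y : ℝ} (hx : 0 < x) (hy : 0 < y) (hΔ : 0 < Δ) :
    (1/Real.sqrt (x*y) ≤ 4*Δ/(x+y)^2 ↔ (x+y)^4 ≤ 16*Δ^2*(x*y)) := by
  have hs : 0 < Real.sqrt (x*y) := Real.sqrt_pos.2 (by positivity)
  have hs2 : Real.sqrt (x*y)^2 = x*y := Real.sq_sqrt (mul_pos hx hy).le
  have hxy : 0 < (x+y)^2 := by positivity
  rw [div_le_div_iff₀ hs hxy, one_mul]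
  have e1 : (4*Δ*Real.sqrt (x*y))^2 = 16*Δ^2*(x*y) := by
    rw [mul_pow, mul_pow, hs2]; ring
  have e2 : ((x+y)^2)^2 = (x+y)^4 := by ring
  rw [← e1, ← e2]
  exact (pow_le_pow_iff_left₀ (by positivity) (by positivity) two_ne_zero).symm

lemma convert_eq {Δ x y : ℝ} (hx : 0 < x) (hy : 0 < y) (hΔ : 0 < Δ) :
    (1/Real.sqrt (x*y) = 4*Δ/(x+y)^2 ↔ (x+y)^4 = 16*Δ^2*(x*y)) := by
  have hs : 0 < Real.sqrt (x*y) := Real.sqrt_pos.2 (by positivity)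
  have hs2 : Real.sqrt (x*y)^2 = x*y := Real.sq_sqrt (mul_pos hx hy).le
  have hxy : 0 < (x+y)^2 := by positivity
  rw [div_eq_div_iff (by positivity) (by positivity), one_mul]
  have e1 : (4*Δ*Real.sqrt (x*y))^2 = 16*Δ^2*(x*y) := by
    rw [mul_pow, mul_pow, hs2]; ring
  have e2 : ((x+y)^2)^2 = (x+y)^4 := by ring
  rw [← e1, ← e2]
  exact (pow_left_inj₀ (by positivity) (by positivity) two_ne_zero).symm

lemma deg_ne_t0_mul {t₀ : ℝ} (ht0 : 0 < t₀) (ht1 : t₀ < 1)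
    (hroot : t₀^3 + 5*t₀^2 + 11*t₀ - 1 = 0) (a b : ℕ) (hb : 0 < b)
    (h : (a:ℝ) = t₀ * b) : False := by
  have hb' : ((b:ℝ)) ≠ 0 := by positivity
  have hq : t₀ = (a:ℝ)/(b:ℝ) := by field_simp [h]; exact h.symm
  set q : ℚ := (a:ℚ)/(b:ℚ) with hqdef
  have hqR : ((q:ℚ):ℝ) = t₀ := by rw [hqdef]; push_cast; rw [hq]
  have h0 : 0 < q := by
    have : (0:ℝ) < ((q:ℚ):ℝ) := by rw [hqR]; exact ht0
    exact_mod_cast this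
  have h1 : q < 1 := by
    have : ((q:ℚ):ℝ) < 1 := by rw [hqR]; exact ht1
    exact_mod_cast this
  apply rat_no_root q h0 h1
  have : ((q^3 + 5*q^2 + 11*q - 1 : ℚ) : ℝ) = 0 := by push_cast; rw [hqR]; exact hroot
  exact_mod_cast this

theorem randic_upper_regular [Fintype V] (G : SimpleGraph V) [DecidableRel G.Adj]
    (hiso : ∀ v : V, 0 < G.degree v) (t₀ : ℝ)
    (ht₀ : t₀ ∈ Set.Ioo (0:ℝ) 1 ∧ t₀^3 + 5*t₀^2 + 11*t₀ - 1 = 0)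
    (hratio : t₀ ≤ (G.minDegree : ℝ) / (G.maxDegree : ℝ)) :
    randicIndex G ≤ 4 * (G.maxDegree : ℝ) * sumConnectivityNeg2 G ∧
    (randicIndex G = 4 * (G.maxDegree : ℝ) * sumConnectivityNeg2 G ↔
      ∃ k, G.IsRegularOfDegree k) := by
  obtain ⟨⟨ht0pos, ht0lt⟩, hroot⟩ := ht₀
  have hΔpos : 0 < (G.maxDegree : ℝ) := by
    by_contra hc
    push_neg at hc
    have h0 : (G.maxDegree : ℝ) = 0 := le_antisymm hc (Nat.cast_nonneg _)
    rw [h0, div_zero] at hratio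
    linarith
  have hΔnat : 0 < G.maxDegree := by exact_mod_cast hΔpos
  have hmin : t₀ * (G.maxDegree : ℝ) ≤ (G.minDegree : ℝ) := (le_div_iff₀ hΔpos).mp hratio
  have hdeg_low : ∀ v, t₀ * (G.maxDegree : ℝ) ≤ (G.degree v : ℝ) := fun v =>
    hmin.trans (Nat.cast_le.2 (G.minDegree_le_degree v))
  have hdeg_hi : ∀ v, (G.degree v : ℝ) ≤ (G.maxDegree : ℝ) := fun v =>
    Nat.cast_le.2 (G.degree_le_maxDegree v)
  have hdeg_pos : ∀ v, (0:ℝ) < (G.degree v : ℝ) := fun v => by exact_mod_cast hiso v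
  have hle : ∀ u : V, ∀ v ∈ G.neighborFinset u,
      1/Real.sqrt ((G.degree u:ℝ)*(G.degree v:ℝ)) ≤
        4*(G.maxDegree:ℝ)*(1/((G.degree u:ℝ)+(G.degree v:ℝ))^2) := by
    intro u v _
    rw [mul_one_div]
    exact (convert_le (hdeg_pos u) (hdeg_pos v) hΔpos).mpr
      (term_le ht0pos hroot (hdeg_pos u) (hdeg_pos v) (hdeg_hi u) (hdeg_hi v)
        (hdeg_low u) (hdeg_low v))
  have hsum : 4*(G.maxDegree:ℝ) * sumConnectivityNeg2 G =
      (1/2) * ∑ u, ∑ v ∈ G.neighborFinset u,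
        4*(G.maxDegree:ℝ)*(1/((G.degree u:ℝ)+(G.degree v:ℝ))^2) := by
    unfold sumConnectivityNeg2
    rw [mul_left_comm]
    congr 1
    rw [Finset.mul_sum]
    refine Finset.sum_congr rfl fun u _ => ?_
    rw [Finset.mul_sum]
  have houter_le : ∀ u ∈ (Finset.univ : Finset V),
      ∑ v ∈ G.neighborFinset u, 1/Real.sqrt ((G.degree u:ℝ)*(G.degree v:ℝ)) ≤
      ∑ v ∈ G.neighborFinset u,
        4*(G.maxDegree:ℝ)*(1/((G.degree u:ℝ)+(G.degree v:ℝ))^2) :=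
    fun u _ => Finset.sum_le_sum (hle u)
  constructor
  · rw [hsum]
    unfold randicIndex
    exact mul_le_mul_of_nonneg_left (Finset.sum_le_sum houter_le) (by norm_num)
  constructor
  · intro heq
    rw [hsum] at heq
    unfold randicIndex at heq
    have hAB := mul_left_cancel₀ (by norm_num : (1/2:ℝ) ≠ 0) heq
    have houter := (Finset.sum_eq_sum_iff_of_le houter_le).mp hAB
    have hterms : ∀ u : V, ∀ v ∈ G.neighborFinset u,
        1/Real.sqrt ((G.degree u:ℝ)*(G.degree v:ℝ)) =
          4*(G.maxDegree:ℝ)*(1/((G.degree u:ℝ)+(G.degree v:ℝ))^2) := fun u =>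
      (Finset.sum_eq_sum_iff_of_le (hle u)).mp (houter u (Finset.mem_univ u))
    refine ⟨G.maxDegree, fun u => ?_⟩
    obtain ⟨v, hv⟩ : (G.neighborFinset u).Nonempty := by
      rw [← Finset.card_pos, G.card_neighborFinset_eq_degree]
      exact hiso u
    have hFH := hterms u v hv
    rw [mul_one_div] at hFH
    have h4 := (convert_eq (hdeg_pos u) (hdeg_pos v) hΔpos).mp hFH
    rcases term_eq ht0pos hroot (hdeg_pos u) (hdeg_pos v) (hdeg_hi u) (hdeg_hi v)
        (hdeg_low u) (hdeg_low v) h4 with ⟨h1, _⟩ | h | h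
    · exact_mod_cast h1
    · exact absurd h (fun hh => deg_ne_t0_mul ht0pos ht0lt hroot _ _ hΔnat hh)
    · exact absurd h (fun hh => deg_ne_t0_mul ht0pos ht0lt hroot _ _ hΔnat hh)
  · rintro ⟨k, hreg⟩
    have hVne : Nonempty V := by
      by_contra hc
      rw [not_nonempty_iff] at hc
      have : G.maxDegree = 0 := by
        simp [SimpleGraph.maxDegree, Finset.univ_eq_empty]
      omega
    obtain ⟨v₀⟩ := hVne
    have hk1 : k ≤ G.maxDegree := hreg v₀ ▸ G.degree_le_maxDegree v₀
    have hk2 : G.maxDegree ≤ k := G.maxDegree_le_of_forall_degree_le k fun v => (hreg v).le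
    have hkmax : G.maxDegree = k := le_antisymm hk2 hk1
    have hkpos : (0:ℝ) < k := by
      have := hiso v₀
      rw [hreg v₀] at this
      exact_mod_cast this
    rw [hsum]
    unfold randicIndex
    congr 1
    refine Finset.sum_congr rfl fun u _ => Finset.sum_congr rfl fun v _ => ?_
    rw [hreg u, hreg v, hkmax, Real.sqrt_mul_self hkpos.le]
    field_simp
    ring
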